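/- Let k ≥ 3 be a natural number, let r = (k·tan(π/k))/2, let D = {z ∈ ℂ : |z − k| < r}, and let F : ℂ → ℂ be defined by F(z) = 2z if z ∈ D and F(z) = e^{2πi/k}·z if z ∉ D. Then the pre-discontinuity set of F is contained in the union of the k rotated closed discs: closure(⋃_{n≥0} (F^[n])⁻¹(frontier D)) ⊆ ⋃_{j=0}^{k−1} {z ∈ ℂ : e^{2πij/k}·z ∈ closure D}. -/

import Mathlib

open Complex Real
open scoped Classical

/-- Section 2.3 (first connectivity example): for `k ≥ 3`,
`r = (k·tan(π/k))/2`, `D` the disc of center `k` and radius `r`, and `F` equal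
to `z ↦ 2z` on `D` and to the rotation `z ↦ e^{2πi/k} z` outside `D`, the
pre-discontinuity set of `F` is contained in the union of the `k` rotated
closed discs. -/
theorem preDiscontinuity_subset_rotated_discs
    (k : ℕ) (hk : 3 ≤ k)
    (r : ℝ) (hr : r = (k * Real.tan (π / k)) / 2)
    (D : Set ℂ) (hD : D = {z : ℂ | ‖z - (k : ℂ)‖ < r})
    (F : ℂ → ℂ)
    (hF : ∀ z : ℂ, F z = if z ∈ D then 2 * z else Complex.exp (2 * π * I / k) * z) :
    closure (⋃ n : ℕ, (F^[n]) ⁻¹' (frontier D)) ⊆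
      ⋃ j : Fin k, {z : ℂ | Complex.exp (2 * π * I * (j : ℕ) / k) * z ∈ closure D} := by
  have hk0 : (k : ℂ) ≠ 0 := Nat.cast_ne_zero.mpr (by omega)
  have hclosed : IsClosed (⋃ j : Fin k,
      {z : ℂ | Complex.exp (2 * π * I * (j : ℕ) / k) * z ∈ closure D}) :=
    isClosed_iUnion_of_finite fun j =>
      isClosed_closure.preimage (continuous_const.mul continuous_id)
  apply closure_minimal _ hclosed
  intro z hz
  simp only [Set.mem_iUnion, Set.mem_preimage] at hz
  obtain ⟨n, hn⟩ := hz
  have hex : ∃ m, F^[m] z ∈ closure D := ⟨n, frontier_subset_closure hn⟩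
  set m := Nat.find hex with hm
  have hmem : F^[m] z ∈ closure D := Nat.find_spec hex
  have key : ∀ i, i ≤ m → F^[i] z = Complex.exp (2 * π * I * i / k) * z := by
    intro i hi
    induction i with
    | zero => simp
    | succ i ih =>
      have hlt : i < m := Nat.lt_of_succ_le hi
      have hni : F^[i] z ∉ D := fun h => Nat.find_min hex hlt (subset_closure h)
      rw [Function.iterate_succ_apply', hF, if_neg hni, ih hlt.le, ← mul_assoc,
        ← Complex.exp_add]
      congr 2
      push_cast
      field_simp
      ring
  have h1 : (2 * π * I * (m : ℂ) / k) =
      2 * π * I * ((m % k : ℕ) : ℂ) / k + ((m / k : ℕ) : ℂ) * (2 * π * I) := by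
    have hmk : ((m % k : ℕ) : ℂ) + (k : ℂ) * ((m / k : ℕ) : ℂ) = (m : ℂ) := by
      exact_mod_cast Nat.mod_add_div m k
    rw [← hmk]
    field_simp
  rw [key m le_rfl, h1, Complex.exp_add] at hmem
  have h2 : Complex.exp (((m / k : ℕ) : ℂ) * (2 * π * I)) = 1 := by
    simpa using Complex.exp_int_mul_two_pi_mul_I ((m / k : ℕ) : ℤ)
  rw [h2, mul_one] at hmem
  exact Set.mem_iUnion.mpr ⟨⟨m % k, Nat.mod_lt m (by omega)⟩, hmem⟩
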